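/- Let p be an odd prime and n a positive integer such that p − 1 divides n. Then ∑_{j=1}^{n/(p−1) − 1} (−1)^{j(p−1)/2} · C(n, j(p−1)) ≡ −1 (mod p) if p ≡ 3 (mod 4) and p + 1 divides n/(p−1), and ≡ 0 (mod p) otherwise. -/

import Mathlib

open Finset Polynomial

lemma sum_range_split {M : Type*} [AddCommGroup M] (f : ℕ → M) (m : ℕ) (hm : 1 ≤ m) :
    ∑ j ∈ Finset.range (m+1), f j = f 0 + (∑ j ∈ Finset.Icc 1 (m-1), f j) + f m := by
  have h : Finset.range (m+1) = insert 0 (insert m (Finset.Icc 1 (m-1))) := by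
    ext x; simp only [Finset.mem_range, Finset.mem_insert, Finset.mem_Icc]; omega
  rw [h, Finset.sum_insert, Finset.sum_insert]
  · abel
  · simp only [Finset.mem_Icc]; omega
  · simp only [Finset.mem_insert, Finset.mem_Icc]; omega

lemma sum_field_units {K : Type*} [Field K] [Fintype K] [DecidableEq K]
    {M : Type*} [AddCommMonoid M] (f : K → M) :
    ∑ b : K, f b = f 0 + ∑ a : Kˣ, f (a : K) := by
  have h : (Finset.univ.map ⟨(fun a => (a : K) : Kˣ → K), Units.val_injective⟩) = Finset.univ \ {0} := by
    ext x
    simpa only [Finset.mem_map, Finset.mem_univ, Function.Embedding.coeFn_mk, true_and,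
      Finset.mem_sdiff, Finset.mem_singleton, IsUnit] using isUnit_iff_ne_zero
  rw [← Finset.add_sum_erase _ f (Finset.mem_univ (0 : K))]
  congr 1
  rw [show (Finset.univ.erase (0:K)) = Finset.univ \ {0} from (Finset.sdiff_singleton_eq_erase _ _).symm,
    ← h, Finset.sum_map]
  rfl

lemma filter_sum (p : ℕ) [Fact p.Prime] {F : Type*} [Field F] [CharP F p]
    (i : F) (m n : ℕ) (hn : n = (p-1) * m) :
    ∑ a : (ZMod p)ˣ, (1 + i * (ZMod.castHom dvd_rfl F) ((a : ZMod p))) ^ n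
      = -∑ j ∈ Finset.range (m+1), (n.choose (j*(p-1)) : F) * i ^ (j*(p-1)) := by
  classical
  have hp := (Fact.out : p.Prime)
  have hp1 : 0 < p - 1 := by have := hp.two_le; omega
  set χ : ZMod p →+* F := ZMod.castHom dvd_rfl F with hχdef
  have step1 : ∀ a : (ZMod p)ˣ, (1 + i * χ ((a : ZMod p))) ^ n
      = ∑ r ∈ Finset.range (n+1), (i * χ ((a:ZMod p))) ^ r * (n.choose r : F) := by
    intro a
    rw [add_comm, add_pow]
    simp only [one_pow, mul_one]
  rw [Finset.sum_congr rfl (fun a _ => step1 a), Finset.sum_comm]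
  have step2 : ∀ r, ∑ a : (ZMod p)ˣ, (i * χ ((a:ZMod p)))^r * (n.choose r : F)
      = (if (p-1) ∣ r then (-1 : F) else 0) * (i^r * (n.choose r : F)) := by
    intro r
    rw [← Finset.sum_mul]
    have e1 : ∑ a : (ZMod p)ˣ, (i * χ ((a:ZMod p)))^r
        = i^r * χ (∑ a : (ZMod p)ˣ, ((a:ZMod p))^r) := by
      rw [map_sum, Finset.mul_sum]
      exact Finset.sum_congr rfl fun a _ => by rw [mul_pow, map_pow]
    have hsum : (∑ a : (ZMod p)ˣ, ((a:ZMod p))^r) = if p - 1 ∣ r then (-1 : ZMod p) else 0 := by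
      have h := FiniteField.sum_pow_units (ZMod p) r
      rw [ZMod.card] at h
      rw [← h]
    rw [e1, hsum, apply_ite χ, map_neg, map_one, map_zero]
    split_ifs <;> ring
  rw [Finset.sum_congr rfl (fun r _ => step2 r)]
  simp only [ite_mul, neg_mul, one_mul, zero_mul]
  rw [← Finset.sum_filter, ← Finset.sum_neg_distrib]
  apply Finset.sum_nbij' (i := fun r => r / (p-1)) (j := fun j => j * (p-1))
  · intro r hr
    simp only [Finset.mem_filter, Finset.mem_range] at hr
    simp only [Finset.mem_range]
    obtain ⟨hr1, k, rfl⟩ := hr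
    rw [Nat.mul_div_cancel_left _ hp1]
    have : (p-1) * k ≤ (p-1) * m := by omega
    exact Nat.lt_succ_of_le (Nat.le_of_mul_le_mul_left this hp1)
  · intro j hj
    simp only [Finset.mem_range] at hj
    simp only [Finset.mem_filter, Finset.mem_range]
    constructor
    · have h2 : j * (p-1) ≤ m * (p-1) := Nat.mul_le_mul_right _ (by omega)
      have h3 : m * (p-1) = n := by rw [hn, mul_comm]
      omega
    · exact dvd_mul_left _ _
  · intro r hr
    simp only [Finset.mem_filter, Finset.mem_range] at hr
    exact Nat.div_mul_cancel hr.2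
  · intro j _
    exact Nat.mul_div_cancel j hp1
  · intro r hr
    simp only [Finset.mem_filter, Finset.mem_range] at hr
    rw [Nat.div_mul_cancel hr.2]; ring

lemma caseA (p m n : ℕ) [Fact p.Prime] (hp2 : 2 < p) (hm : 1 ≤ m) (hn : n = (p-1)*m) :
    (p:ℤ) ∣ ∑ j ∈ Finset.Icc 1 (m-1), (n.choose (j*(p-1)) : ℤ) := by
  classical
  have hp := (Fact.out : p.Prime)
  have hn0 : 0 < n := by have h1 : 0 < p - 1 := by omega
                         exact hn ▸ Nat.mul_pos h1 hm
  have hfs := filter_sum p (1 : ZMod p) m n hn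
  have hid : ∀ a : (ZMod p)ˣ, (ZMod.castHom dvd_rfl (ZMod p)) ((a : ZMod p)) = (a : ZMod p) := by
    intro a; simp [ZMod.castHom_apply, ZMod.cast_id']
  have hlhs : ∑ a : (ZMod p)ˣ, (1 + (1:ZMod p) * (ZMod.castHom dvd_rfl (ZMod p)) ((a : ZMod p))) ^ n
      = -2 := by
    have e0 : ∑ a : (ZMod p)ˣ, (1 + (1:ZMod p) * (ZMod.castHom dvd_rfl (ZMod p)) ((a : ZMod p))) ^ n
        = ∑ a : (ZMod p)ˣ, (1 + (a : ZMod p)) ^ n := by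
      refine Finset.sum_congr rfl fun a _ => by rw [hid a, one_mul]
    have e1 : ∑ b : ZMod p, b ^ n = -1 := by
      rw [sum_field_units (fun b : ZMod p => b ^ n), zero_pow (by omega)]
      have h := FiniteField.sum_pow_units (ZMod p) n
      rw [ZMod.card] at h
      rw [h, if_pos (hn ▸ dvd_mul_right _ _), zero_add]
    have e2 : ∑ b : ZMod p, (1 + b) ^ n = ∑ b : ZMod p, b ^ n := by
      apply Fintype.sum_bijective (fun b : ZMod p => 1 + b)
      · exact ⟨fun x y h => by exact add_left_cancel h, fun y => ⟨y - 1, by ring⟩⟩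
      · intro x; rfl
    have e3 : ∑ b : ZMod p, (1 + b) ^ n = (1 + 0)^n + ∑ a : (ZMod p)ˣ, (1 + (a:ZMod p))^n :=
      sum_field_units (fun b : ZMod p => (1 + b) ^ n)
    rw [e0]
    have h10 : (1 + (0:ZMod p))^n = 1 := by norm_num
    rw [h10] at e3
    have hfin := e3.symm.trans (e2.trans e1)
    linear_combination hfin
  rw [hlhs] at hfs
  have hsum2 : ∑ j ∈ Finset.range (m+1), ((n.choose (j*(p-1)) : ZMod p)) = 2 := by
    have hcg : ∀ j ∈ Finset.range (m+1), (n.choose (j*(p-1)) : ZMod p) * (1:ZMod p)^(j*(p-1))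
        = (n.choose (j*(p-1)) : ZMod p) := fun j _ => by rw [one_pow, mul_one]
    rw [← Finset.sum_congr rfl hcg]
    linear_combination hfs
  rw [sum_range_split (fun j => ((n.choose (j*(p-1)) : ZMod p))) m hm] at hsum2
  have hc0 : (n.choose (0*(p-1)) : ZMod p) = 1 := by norm_num
  have hcm : (n.choose (m*(p-1)) : ZMod p) = 1 := by
    rw [show m*(p-1) = n by rw [hn, mul_comm], Nat.choose_self]; norm_num
  have hmid : ∑ j ∈ Finset.Icc 1 (m-1), ((n.choose (j*(p-1)) : ZMod p)) = 0 := by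
    rw [hc0, hcm] at hsum2
    linear_combination hsum2
  have hfin2 : ((∑ j ∈ Finset.Icc 1 (m-1), (n.choose (j*(p-1)) : ℤ) : ℤ) : ZMod p) = 0 := by
    push_cast
    exact hmid
  exact (ZMod.intCast_zmod_eq_zero_iff_dvd _ p).mp hfin2

lemma caseB_aux (p m n : ℕ) [Fact p.Prime] {F : Type*} [Field F] [Fintype F] [CharP F p]
    (hcard : Fintype.card F = p^2) (hp4 : p % 4 = 3) (hm : 1 ≤ m) (hn : n = (p-1)*m) :
    (p:ℤ) ∣ (∑ j ∈ Finset.Icc 1 (m-1), (-1)^j * (n.choose (j*(p-1)) : ℤ)) -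
      (if (p+1) ∣ m then -1 else 0) := by
  classical
  have hp := (Fact.out : p.Prime)
  have hp3 : 3 ≤ p := by
    have := hp.two_le
    omega
  set χ : ZMod p →+* F := ZMod.castHom dvd_rfl F with hχdef
  have hχinj : Function.Injective χ := χ.injective
  have hfact : (p+1) * (p-1) = p^2 - 1 := by
    have := Nat.sq_sub_sq p 1
    simp only [one_pow, mul_one] at this
    omega
  -- generator and roots of unity
  obtain ⟨g, hg⟩ := IsCyclic.exists_generator (α := Fˣ)
  have hgord : orderOf g = p^2 - 1 := by
    rw [orderOf_eq_card_of_forall_mem_zpowers hg, Nat.card_eq_fintype_card,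
      Fintype.card_units, hcard]
  have hcard1 : orderOf g ≠ 0 := by
    rw [hgord]
    have h4 : 4 ≤ p^2 := by nlinarith
    omega
  have hdvd1 : (p+1) ∣ orderOf g := by rw [hgord]; exact ⟨p-1, hfact.symm⟩
  set η : Fˣ := g ^ (orderOf g / (p+1)) with hηdef
  have hηord : orderOf η = p + 1 := orderOf_pow_orderOf_div hcard1 hdvd1
  set ηF : F := (η : F) with hηFdef
  have hηFord : orderOf ηF = p + 1 := by rw [hηFdef, orderOf_units, hηord]
  have hprim : IsPrimitiveRoot ηF (p+1) := by
    have := IsPrimitiveRoot.orderOf ηF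
    rwa [hηFord] at this
  -- the square root of -1
  have hdvd4 : (4:ℕ) ∣ orderOf η := by rw [hηord]; omega
  set iu : Fˣ := η ^ (orderOf η / 4) with hiudef
  have hiuord : orderOf iu = 4 := orderOf_pow_orderOf_div (by rw [hηord]; omega) hdvd4
  set i : F := (iu : F) with hidef
  have hi4 : i ^ 4 = 1 := by
    rw [hidef, ← Units.val_pow_eq_pow_val, ← hiuord, pow_orderOf_eq_one, Units.val_one]
  have hi2ne : i ^ 2 ≠ 1 := by
    intro h
    have : iu ^ 2 = 1 := Units.ext (by rw [Units.val_pow_eq_pow_val]; exact h)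
    have := orderOf_dvd_of_pow_eq_one this
    rw [hiuord] at this
    omega
  have hi2 : i ^ 2 = -1 := by
    have hz : (i^2 - 1) * (i^2 + 1) = 0 := by
      have : (i^2 - 1) * (i^2 + 1) = i^4 - 1 := by ring
      rw [this, hi4, sub_self]
    rcases mul_eq_zero.mp hz with h | h
    · exact absurd (by linear_combination h) hi2ne
    · linear_combination h
  have hine : i ≠ 0 := by
    intro h
    rw [h] at hi2
    simp at hi2
  have hip : i ^ p = -i := by
    obtain ⟨k, hk⟩ : ∃ k, p = 4*k+3 := ⟨p/4, by omega⟩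
    rw [hk, pow_add, pow_mul, hi4, one_pow, one_mul, pow_succ, hi2]
    ring
  have hipm1 : i ^ (p-1) = -1 := by
    have h1 : i ^ (p-1) * i = -1 * i := by
      rw [← pow_succ, show p - 1 + 1 = p by omega, hip]
      ring
    exact mul_right_cancel₀ hine h1
  have h2F : (2 : F) ≠ 0 := by
    intro h
    have := (CharP.cast_eq_zero_iff F p 2).mp (by exact_mod_cast h)
    have := Nat.le_of_dvd (by norm_num) this
    omega
  have hneg1 : (-1 : F) ≠ 1 := by
    intro h
    exact h2F (by linear_combination -h)
  -- w and its properties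
  set w : (ZMod p)ˣ → F := fun a => 1 + i * χ ((a : ZMod p)) with hwdef
  have hwne : ∀ a : (ZMod p)ˣ, w a ≠ 0 := by
    intro a h
    have h1 : i * χ ((a:ZMod p)) = -1 := by
      rw [hwdef] at h
      linear_combination h
    have h3 : (i * χ ((a:ZMod p)))^2 = 1 := by rw [h1]; ring
    have h4 : (χ ((a:ZMod p)))^2 = -1 := by
      have hexp : (i * χ ((a:ZMod p)))^2 = i^2 * (χ ((a:ZMod p)))^2 := by ring
      rw [hexp, hi2] at h3
      linear_combination -h3
    have h5 : ((a:ZMod p) * (a:ZMod p)) = -1 := by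
      apply hχinj
      rw [map_mul, map_neg, map_one]
      linear_combination h4
    have h6 : IsSquare (-1 : ZMod p) := ⟨(a:ZMod p), h5.symm⟩
    exact (ZMod.exists_sq_eq_neg_one_iff.mp h6) hp4
  have hwp : ∀ a : (ZMod p)ˣ, (w a) ^ p = 1 - i * χ ((a:ZMod p)) := by
    intro a
    show (1 + i * χ ((a:ZMod p))) ^ p = _
    rw [add_pow_char, one_pow, mul_pow, hip, ← map_pow, ZMod.pow_card]
    ring
  set ψ : (ZMod p)ˣ → F := fun a => (1 - i * χ ((a:ZMod p))) / (w a) with hψdef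
  have hψeq : ∀ a : (ZMod p)ˣ, (w a) ^ (p-1) = ψ a := by
    intro a
    rw [hψdef]
    simp only []
    rw [eq_div_iff (hwne a), ← pow_succ, show p - 1 + 1 = p by omega, hwp]
  set U : Finset F := Polynomial.nthRootsFinset (p+1) (1 : F) with hUdef
  have hUmem : ∀ x : F, x ∈ U ↔ x ^ (p+1) = 1 := fun x =>
    Polynomial.mem_nthRootsFinset (by omega) 1
  have hUcard : U.card = p + 1 := hprim.card_nthRootsFinset
  have hψU : ∀ a : (ZMod p)ˣ, ψ a ∈ U := by
    intro a
    rw [hUmem, ← hψeq, ← pow_mul, show (p-1)*(p+1) = Fintype.card F - 1 by rw [hcard, ← hfact]; ring]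
    exact FiniteField.pow_card_sub_one_eq_one (w a) (hwne a)
  have hχa_ne : ∀ a : (ZMod p)ˣ, χ ((a:ZMod p)) ≠ 0 := by
    intro a h
    have : ((a:ZMod p)) = 0 := hχinj (by rw [h, map_zero])
    exact a.ne_zero this
  have hψne1 : ∀ a : (ZMod p)ˣ, ψ a ≠ 1 := by
    intro a h
    rw [hψdef] at h
    simp only [] at h
    rw [div_eq_one_iff_eq (hwne a), hwdef] at h
    have h2 : 2 * (i * χ ((a:ZMod p))) = 0 := by linear_combination -h
    rcases mul_eq_zero.mp h2 with h3 | h3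
    · exact h2F h3
    · rcases mul_eq_zero.mp h3 with h4 | h4
      · exact hine h4
      · exact hχa_ne a h4
  have hψneneg1 : ∀ a : (ZMod p)ˣ, ψ a ≠ -1 := by
    intro a h
    rw [hψdef] at h
    simp only [] at h
    rw [div_eq_iff (hwne a), hwdef] at h
    have h2 : (2:F) = 0 := by linear_combination h
    exact h2F h2
  have hψinj : Function.Injective ψ := by
    intro a b h
    rw [hψdef] at h
    simp only [] at h
    rw [div_eq_div_iff (hwne a) (hwne b), hwdef] at h
    have h2 : 2 * i * (χ ((b:ZMod p)) - χ ((a:ZMod p))) = 0 := by linear_combination h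
    have h3 : χ ((b:ZMod p)) - χ ((a:ZMod p)) = 0 := by
      rcases mul_eq_zero.mp h2 with h4 | h4
      · rcases mul_eq_zero.mp h4 with h5 | h5
        · exact absurd h5 h2F
        · exact absurd h5 hine
      · exact h4
    have h5 : ((b:ZMod p)) = ((a:ZMod p)) := hχinj (by linear_combination h3)
    exact Units.ext (h5.symm)
  have hsub : Finset.image ψ Finset.univ ⊆ U \ {1, -1} := by
    intro x hx
    rw [Finset.mem_image] at hx
    obtain ⟨a, -, rfl⟩ := hx
    rw [Finset.mem_sdiff]
    refine ⟨hψU a, ?_⟩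
    simp only [Finset.mem_insert, Finset.mem_singleton]
    push_neg
    exact ⟨hψne1 a, hψneneg1 a⟩
  have hVsub : ({1, -1} : Finset F) ⊆ U := by
    intro x hx
    simp only [Finset.mem_insert, Finset.mem_singleton] at hx
    rcases hx with rfl | rfl
    · rw [hUmem]; exact one_pow _
    · rw [hUmem]
      have hev : Even (p+1) := by rw [Nat.even_iff]; omega
      exact hev.neg_one_pow
  have hVcard : ({1, -1} : Finset F).card = 2 := by
    rw [Finset.card_insert_of_notMem (by simp only [Finset.mem_singleton]; exact fun h => hneg1 h.symm),
      Finset.card_singleton]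
  have himg : Finset.image ψ Finset.univ = U \ {1, -1} := by
    apply Finset.eq_of_subset_of_card_le hsub
    rw [Finset.card_sdiff_of_subset hVsub, hUcard, hVcard,
      Finset.card_image_of_injective _ hψinj, Finset.card_univ, ZMod.card_units]
    omega
  have hηFU : ηF ∈ U := by rw [hUmem]; exact hprim.pow_eq_one
  have hηFne : ηF ≠ 0 := hprim.ne_zero (by omega)
  have hUsum : ∑ u ∈ U, u ^ m = (if (p+1) ∣ m then 1 else 0 : F) := by
    split_ifs with hdvdm
    · obtain ⟨k, rfl⟩ := hdvdm
      have hone : ∀ u ∈ U, u ^ ((p+1)*k) = 1 := by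
        intro u hu
        rw [pow_mul, (hUmem u).mp hu, one_pow]
      rw [Finset.sum_congr rfl hone, Finset.sum_const, hUcard, nsmul_eq_mul, mul_one]
      push_cast
      rw [CharP.cast_eq_zero F p]
      ring
    · have hηm : ηF ^ m ≠ 1 := by
        intro h
        exact hdvdm (hηFord ▸ orderOf_dvd_of_pow_eq_one h)
      have hmul : ∑ u ∈ U, (ηF * u) ^ m = ∑ u ∈ U, u ^ m := by
        apply Finset.sum_nbij' (i := fun u => ηF * u) (j := fun u => ηF⁻¹ * u)
        · intro u hu
          have := Polynomial.mul_mem_nthRootsFinset hηFU hu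
          rwa [one_mul] at this
        · intro u hu
          have h1 : ηF⁻¹ ∈ U := by
            rw [hUmem, inv_pow, hprim.pow_eq_one, inv_one]
          have := Polynomial.mul_mem_nthRootsFinset h1 hu
          rwa [one_mul] at this
        · intro u _
          exact inv_mul_cancel_left₀ hηFne u
        · intro u _
          exact mul_inv_cancel_left₀ hηFne u
        · intro u _
          rfl
      have h2 : ηF ^ m * ∑ u ∈ U, u ^ m = ∑ u ∈ U, u ^ m := by
        rw [Finset.mul_sum, ← hmul]
        exact Finset.sum_congr rfl fun u _ => (mul_pow _ _ _).symm
      have h3 : (ηF ^ m - 1) * ∑ u ∈ U, u ^ m = 0 := by linear_combination h2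
      rcases mul_eq_zero.mp h3 with h4 | h4
      · exact absurd (by linear_combination h4) hηm
      · exact h4
  have hwsum : ∑ a : (ZMod p)ˣ, (w a) ^ n = (if (p+1) ∣ m then 1 else 0 : F) - 1 - (-1)^m := by
    have e1 : ∀ a : (ZMod p)ˣ, (w a)^n = (ψ a)^m := by
      intro a; rw [hn, pow_mul, hψeq]
    rw [Finset.sum_congr rfl (fun a _ => e1 a)]
    have e2 : ∑ a : (ZMod p)ˣ, (ψ a)^m = ∑ x ∈ Finset.image ψ Finset.univ, x^m :=
      (Finset.sum_image (fun a _ b _ h => hψinj h)).symm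
    rw [e2, himg]
    have e3 : ∑ x ∈ U \ {1,-1}, x^m = ∑ x ∈ U, x^m - ∑ x ∈ ({1,-1}:Finset F), x^m := by
      rw [eq_sub_iff_add_eq, Finset.sum_sdiff hVsub]
    have e4 : ∑ x ∈ ({1,-1}:Finset F), x^m = 1 + (-1)^m := by
      rw [Finset.sum_insert (by simp only [Finset.mem_singleton]; exact fun h => hneg1 h.symm),
        Finset.sum_singleton, one_pow]
    rw [e3, hUsum, e4]
    ring
  have hfs : ∑ a : (ZMod p)ˣ, (w a)^n
      = -∑ j ∈ Finset.range (m+1), (n.choose (j*(p-1)) : F) * i ^ (j*(p-1)) :=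
    filter_sum p i m n hn
  have hsignj : ∀ j : ℕ, (i:F)^(j*(p-1)) = (-1)^j := by
    intro j
    rw [mul_comm, pow_mul, hipm1]
  have hbig : ∑ j ∈ Finset.range (m+1), (-1:F)^j * (n.choose (j*(p-1)) : F)
      = 1 + (-1)^m - (if (p+1) ∣ m then 1 else 0) := by
    have e5 : ∑ j ∈ Finset.range (m+1), (n.choose (j*(p-1)) : F) * i ^ (j*(p-1))
        = ∑ j ∈ Finset.range (m+1), (-1:F)^j * (n.choose (j*(p-1)) : F) := by
      refine Finset.sum_congr rfl fun j _ => ?_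
      rw [hsignj j, mul_comm]
    rw [hwsum, e5] at hfs
    linear_combination hfs
  rw [sum_range_split (fun j => (-1:F)^j * (n.choose (j*(p-1)) : F)) m hm] at hbig
  have hc0 : (-1:F)^0 * (n.choose (0*(p-1)) : F) = 1 := by norm_num
  have hcm : (-1:F)^m * (n.choose (m*(p-1)) : F) = (-1)^m := by
    rw [show m*(p-1) = n by rw [hn, mul_comm], Nat.choose_self]
    norm_num
  rw [hc0, hcm] at hbig
  have hmid : ∑ j ∈ Finset.Icc 1 (m-1), (-1:F)^j * (n.choose (j*(p-1)) : F)
      = -(if (p+1) ∣ m then 1 else 0) := by linear_combination hbig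
  have hcastF : (((∑ j ∈ Finset.Icc 1 (m-1), (-1)^j * (n.choose (j*(p-1)) : ℤ)) -
      (if (p+1) ∣ m then -1 else 0) : ℤ) : F) = 0 := by
    split_ifs with hd
    · rw [if_pos hd] at hmid
      push_cast
      linear_combination hmid
    · rw [if_neg hd] at hmid
      push_cast
      linear_combination hmid
  have hz : (((∑ j ∈ Finset.Icc 1 (m-1), (-1)^j * (n.choose (j*(p-1)) : ℤ)) -
      (if (p+1) ∣ m then -1 else 0) : ℤ) : ZMod p) = 0 := by
    apply hχinj
    rw [map_intCast, map_zero]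
    exact hcastF
  exact (ZMod.intCast_zmod_eq_zero_iff_dvd _ p).mp hz

lemma caseB (p m n : ℕ) [Fact p.Prime] (hp4 : p % 4 = 3) (hm : 1 ≤ m) (hn : n = (p-1)*m) :
    (p:ℤ) ∣ (∑ j ∈ Finset.Icc 1 (m-1), (-1)^j * (n.choose (j*(p-1)) : ℤ)) -
      (if (p+1) ∣ m then -1 else 0) := by
  haveI : Fintype (GaloisField p 2) := Fintype.ofFinite _
  have hcard : Fintype.card (GaloisField p 2) = p^2 := by
    have h := GaloisField.card p 2 (by norm_num)
    rwa [Nat.card_eq_fintype_card] at h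
  exact caseB_aux p m n (F := GaloisField p 2) hcard hp4 hm hn

theorem alternating_lacunary_binomial_sum (p n : ℕ) (hp : p.Prime) (hpodd : Odd p)
    (hn : 0 < n) (hdvd : (p - 1) ∣ n) :
    (p : ℤ) ∣ (∑ j ∈ Finset.Icc 1 (n / (p - 1) - 1),
        (-1) ^ (j * (p - 1) / 2) * (n.choose (j * (p - 1)) : ℤ)) -
      (if p % 4 = 3 ∧ (p + 1) ∣ n / (p - 1) then -1 else 0) := by
  haveI := Fact.mk hp
  have hp2 : 2 < p := by
    rcases hp.two_le.lt_or_eq with h | h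
    · exact h
    · exfalso; rw [← h] at hpodd; exact (Nat.not_odd_iff_even.mpr even_two) hpodd
  set m := n / (p - 1) with hmdef
  have hnm : n = (p-1) * m := (Nat.mul_div_cancel' hdvd).symm
  have hm1 : 1 ≤ m := by
    rcases Nat.eq_zero_or_pos m with h | h
    · rw [h, mul_zero] at hnm; omega
    · exact h
  have h2d : (2:ℕ) ∣ (p-1) := by
    have := Nat.odd_iff.mp hpodd
    omega
  have hmod : p % 4 = 1 ∨ p % 4 = 3 := by
    have h := Nat.mod_mod_of_dvd p (by norm_num : (2:ℕ) ∣ 4)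
    have := Nat.odd_iff.mp hpodd
    omega
  have hsign : ∀ j : ℕ, ((-1 : ℤ)) ^ (j * (p - 1) / 2) = ((-1:ℤ) ^ ((p-1)/2))^j := by
    intro j
    rw [Nat.mul_div_assoc j h2d, mul_comm, pow_mul]
  rcases hmod with h4 | h4
  · -- p ≡ 1 mod 4
    have hev : Even ((p-1)/2) := by
      rw [Nat.even_iff]; omega
    have hone : ((-1:ℤ) ^ ((p-1)/2)) = 1 := hev.neg_one_pow
    have hsum : ∑ j ∈ Finset.Icc 1 (m - 1), (-1:ℤ) ^ (j * (p - 1) / 2) * (n.choose (j * (p - 1)) : ℤ)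
        = ∑ j ∈ Finset.Icc 1 (m - 1), (n.choose (j * (p - 1)) : ℤ) := by
      refine Finset.sum_congr rfl fun j _ => ?_
      rw [hsign j, hone, one_pow, one_mul]
    rw [hsum, if_neg (by rintro ⟨h3, -⟩; omega), sub_zero]
    exact caseA p m n hp2 hm1 hnm
  · -- p ≡ 3 mod 4
    have hodd : Odd ((p-1)/2) := by
      rw [Nat.odd_iff]; omega
    have hone : ((-1:ℤ) ^ ((p-1)/2)) = -1 := hodd.neg_one_pow
    have hsum : ∑ j ∈ Finset.Icc 1 (m - 1), (-1:ℤ) ^ (j * (p - 1) / 2) * (n.choose (j * (p - 1)) : ℤ)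
        = ∑ j ∈ Finset.Icc 1 (m - 1), (-1:ℤ)^j * (n.choose (j * (p - 1)) : ℤ) := by
      refine Finset.sum_congr rfl fun j _ => ?_
      rw [hsign j, hone]
    rw [hsum, show (if p % 4 = 3 ∧ (p+1) ∣ m then (-1:ℤ) else 0) = (if (p+1) ∣ m then (-1:ℤ) else 0)
      from by by_cases hd : (p+1) ∣ m <;> simp [h4, hd]]
    exact caseB p m n h4 hm1 hnm
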